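/- Let Φ : ℝ → (-∞, +∞] be a proper convex function with Φ(y) = +∞ for y ∉ (a,b), and suppose Φ is differentiable on (a,b) with Φ'(x) → -∞ as x → a⁺ and Φ'(x) → +∞ as x → b⁻. Fix m ∈ (a+ε, b-ε) for some ε > 0. Then there exist constants C_ε > 0 and C̃_ε ≥ 0 such that for all φ ∈ (a,b), Φ'(φ)(φ - m) ≥ C_ε |Φ'(φ)| - C̃_ε. -/
import Mathlib

theorem singular_potential_coercivity (a b ε m : ℝ) (hε : 0 < ε)
    (hm : m ∈ Set.Ioo (a + ε) (b - ε)) (Φ Φ' : ℝ → ℝ)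
    (hconv : ConvexOn ℝ (Set.Ioo a b) Φ)
    (hderiv : ∀ x ∈ Set.Ioo a b, HasDerivAt Φ (Φ' x) x)
    (ha : Filter.Tendsto Φ' (nhdsWithin a (Set.Ioi a)) Filter.atBot)
    (hb : Filter.Tendsto Φ' (nhdsWithin b (Set.Iio b)) Filter.atTop) :
    ∃ C C' : ℝ, 0 < C ∧ 0 ≤ C' ∧
      ∀ φ ∈ Set.Ioo a b, C * |Φ' φ| - C' ≤ Φ' φ * (φ - m) := by
  obtain ⟨hm1, hm2⟩ := hm
  -- monotonicity of Φ' on Ioo a b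
  have mono : ∀ x ∈ Set.Ioo a b, ∀ y ∈ Set.Ioo a b, x < y → Φ' x ≤ Φ' y := by
    intro x hx y hy hxy
    have h1 := hconv.le_slope_of_hasDerivAt hx hy hxy (hderiv x hx)
    have h2 := hconv.slope_le_of_hasDerivAt hx hy hxy (hderiv y hy)
    linarith
  have hab : a < b := by linarith
  have hp1 : m - ε / 2 ∈ Set.Ioo a b := ⟨by linarith, by linarith⟩
  have hp2 : m + ε / 2 ∈ Set.Ioo a b := ⟨by linarith, by linarith⟩
  set M : ℝ := max |Φ' (m - ε / 2)| |Φ' (m + ε / 2)| with hM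
  have hM0 : 0 ≤ M := le_trans (abs_nonneg _) (le_max_left _ _)
  refine ⟨ε / 2, M * (ε / 2) + M * (b - a), by linarith, by nlinarith [mul_nonneg hM0 (by linarith : (0:ℝ) ≤ b - a), mul_nonneg hM0 (by linarith : (0:ℝ) ≤ ε/2)], ?_⟩
  intro φ hφ
  obtain ⟨hφ1, hφ2⟩ := hφ
  rcases le_or_gt φ (m - ε / 2) with h1 | h1
  · -- left region: Φ' φ ≤ Φ' (m - ε/2), and φ - m ≤ -ε/2 < 0
    have hle : Φ' φ ≤ Φ' (m - ε / 2) := by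
      rcases eq_or_lt_of_le h1 with h | h
      · rw [h]
      · exact mono φ ⟨hφ1, hφ2⟩ _ hp1 h
    rcases le_or_gt (Φ' φ) 0 with hs | hs
    · -- Φ' φ ≤ 0, φ - m ≤ -ε/2 : product ≥ |Φ' φ| * ε/2
      have : ε / 2 * |Φ' φ| ≤ Φ' φ * (φ - m) := by
        rw [abs_of_nonpos hs]
        nlinarith
      linarith [mul_nonneg hM0 (by linarith : (0:ℝ) ≤ b - a), mul_nonneg hM0 (by linarith : (0:ℝ) ≤ ε/2)]
    · -- Φ' φ > 0, then |Φ' φ| ≤ M and product ≥ -M(b-a)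
      have habs : |Φ' φ| ≤ M := by
        rw [abs_of_pos hs]
        calc Φ' φ ≤ Φ' (m - ε/2) := hle
          _ ≤ |Φ' (m - ε/2)| := le_abs_self _
          _ ≤ M := le_max_left _ _
      have hprod : -(M * (b - a)) ≤ Φ' φ * (φ - m) := by
        have hd : |φ - m| ≤ b - a := by
          rw [abs_le]; constructor <;> nlinarith
        calc -(M * (b - a)) ≤ -(|Φ' φ| * |φ - m|) := by
              apply neg_le_neg
              exact mul_le_mul habs hd (abs_nonneg _) hM0
          _ = -|Φ' φ * (φ - m)| := by rw [abs_mul]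
          _ ≤ Φ' φ * (φ - m) := neg_abs_le _
      nlinarith
  · rcases le_or_gt (m + ε / 2) φ with h2 | h2
    · -- right region
      have hge : Φ' (m + ε / 2) ≤ Φ' φ := by
        rcases eq_or_lt_of_le h2 with h | h
        · rw [← h]
        · exact mono _ hp2 φ ⟨hφ1, hφ2⟩ h
      rcases le_or_gt 0 (Φ' φ) with hs | hs
      · have : ε / 2 * |Φ' φ| ≤ Φ' φ * (φ - m) := by
          rw [abs_of_nonneg hs]
          nlinarith
        linarith [mul_nonneg hM0 (by linarith : (0:ℝ) ≤ b - a), mul_nonneg hM0 (by linarith : (0:ℝ) ≤ ε/2)]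
      · have habs : |Φ' φ| ≤ M := by
          rw [abs_of_neg hs]
          calc -Φ' φ ≤ -Φ' (m + ε/2) := by linarith
            _ ≤ |Φ' (m + ε/2)| := neg_le_abs _
            _ ≤ M := le_max_right _ _
        have hprod : -(M * (b - a)) ≤ Φ' φ * (φ - m) := by
          have hd : |φ - m| ≤ b - a := by
            rw [abs_le]; constructor <;> nlinarith
          calc -(M * (b - a)) ≤ -(|Φ' φ| * |φ - m|) := by
                apply neg_le_neg
                exact mul_le_mul habs hd (abs_nonneg _) hM0
            _ = -|Φ' φ * (φ - m)| := by rw [abs_mul]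
            _ ≤ Φ' φ * (φ - m) := neg_abs_le _
        nlinarith
    · -- middle region: |Φ' φ| ≤ M, |φ - m| ≤ ε/2
      have hl : Φ' (m - ε/2) ≤ Φ' φ := mono _ hp1 φ ⟨hφ1, hφ2⟩ (by linarith)
      have hr : Φ' φ ≤ Φ' (m + ε/2) := mono φ ⟨hφ1, hφ2⟩ _ hp2 (by linarith)
      have habs : |Φ' φ| ≤ M := by
        rw [abs_le]
        constructor
        · calc -M ≤ -|Φ' (m - ε/2)| := neg_le_neg (le_max_left _ _)
            _ ≤ Φ' (m - ε/2) := neg_abs_le _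
            _ ≤ Φ' φ := hl
        · calc Φ' φ ≤ Φ' (m + ε/2) := hr
            _ ≤ |Φ' (m + ε/2)| := le_abs_self _
            _ ≤ M := le_max_right _ _
      have hd : |φ - m| ≤ ε / 2 := by rw [abs_le]; constructor <;> linarith
      have hprod : -(M * (ε/2)) ≤ Φ' φ * (φ - m) := by
        calc -(M * (ε/2)) ≤ -(|Φ' φ| * |φ - m|) := by
              apply neg_le_neg
              exact mul_le_mul habs hd (abs_nonneg _) hM0
          _ = -|Φ' φ * (φ - m)| := by rw [abs_mul]
          _ ≤ Φ' φ * (φ - m) := neg_abs_le _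
      nlinarith
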